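/- Let (X,f) be a dynamical system with X a compact metric space and f : X → X a continuous map which is chain mixing. Then f has the average shadowing property if and only if for every ε > 0 there is δ > 0 such that every (genuine) δ-pseudo-orbit {x_i}_{i≥0} of f is ε-shadowed in average by some point of X. -/

import Mathlib

open Filter Metric Set MeasureTheory Topology

section Defs

variable {X : Type*} [MetricSpace X]

/-- The Bowen ball of radius `ε` centered at `x` along a finite set of times `Λ`. -/
def bowenBallAlong (f : X → X) (Λ : Finset ℕ) (x : X) (ε : ℝ) : Set X :=
  {y | ∀ j ∈ Λ, dist (f^[j] x) (f^[j] y) < ε}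

/-- `g` is a mistake function with threshold `ε₀`. -/
structure IsMistakeFun (g : ℕ → ℝ → ℕ) (ε₀ : ℝ) : Prop where
  pos : 0 < ε₀
  mono : ∀ n : ℕ, ∀ ε : ℝ, 0 < ε → ε ≤ ε₀ → g n ε ≤ g (n + 1) ε
  small : ∀ ε : ℝ, 0 < ε → ε ≤ ε₀ →
    Tendsto (fun n : ℕ => (g n ε : ℝ) / n) atTop (nhds 0)
  ext : ∀ n : ℕ, ∀ ε : ℝ, ε₀ < ε → g n ε = g n ε₀

/-- The `(g;n,ε)`-Bowen ball `B_n(g;x,ε)`: union of Bowen balls along all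
`Λ ⊆ {0,…,n-1}` with `#Λ ≥ n - g(n,ε)`. -/
def mistakeBowenBall (f : X → X) (g : ℕ → ℝ → ℕ) (n : ℕ) (x : X) (ε : ℝ) : Set X :=
  ⋃ Λ ∈ {Λ : Finset ℕ | Λ ⊆ Finset.range n ∧ n - g n ε ≤ Λ.card},
    bowenBallAlong f Λ x ε

/-- Almost specification property with given mistake function `g` and gap function `kg`. -/
def AlmostSpecWith (f : X → X) (g : ℕ → ℝ → ℕ) (kg : ℝ → ℕ) : Prop :=
  ∀ m : ℕ, 1 ≤ m → ∀ (ε : ℕ → ℝ) (x : ℕ → X) (nseq : ℕ → ℕ),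
    (∀ j, 1 ≤ j → j ≤ m → 0 < ε j) →
    (∀ j, 1 ≤ j → j ≤ m → kg (ε j) ≤ nseq j) →
    ∃ z : X, ∀ j, 1 ≤ j → j ≤ m →
      f^[∑ s ∈ Finset.Ico 1 j, nseq s] z ∈ mistakeBowenBall f g (nseq j) (x j) (ε j)

/-- The almost specification property. -/
def AlmostSpec (f : X → X) : Prop :=
  ∃ (g : ℕ → ℝ → ℕ) (ε₀ : ℝ) (kg : ℝ → ℕ),
    IsMistakeFun g ε₀ ∧ AlmostSpecWith f g kg

/-- `{x_n}` is a `δ`-average-pseudo-orbit of `f`. -/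
def AvgPseudoOrbit (f : X → X) (δ : ℝ) (x : ℕ → X) : Prop :=
  ∃ N : ℕ, 0 < N ∧ ∀ n : ℕ, N ≤ n → ∀ k : ℕ,
    (∑ i ∈ Finset.range n, dist (f (x (i + k))) (x (i + k + 1))) / n < δ

/-- `{x_n}` is `ε`-shadowed in average by `y`. -/
def ShadowedInAvg (f : X → X) (ε : ℝ) (x : ℕ → X) (y : X) : Prop :=
  limsup (fun n : ℕ => (∑ i ∈ Finset.range n, dist (f^[i] y) (x i)) / n) atTop < ε

/-- The average shadowing property. -/
def AvgShadowing (f : X → X) : Prop :=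
  ∀ ε : ℝ, 0 < ε → ∃ δ : ℝ, 0 < δ ∧
    ∀ x : ℕ → X, AvgPseudoOrbit f δ x → ∃ y : X, ShadowedInAvg f ε x y

/-- `{x_n}` is an asymptotic average pseudo-orbit of `f`. -/
def AsympAvgPseudoOrbit (f : X → X) (x : ℕ → X) : Prop :=
  Tendsto (fun n : ℕ => (∑ i ∈ Finset.range n, dist (f (x i)) (x (i + 1))) / n)
    atTop (nhds 0)

/-- `{x_n}` is asymptotically shadowed in average by `y`. -/
def AsympShadowedInAvg (f : X → X) (x : ℕ → X) (y : X) : Prop :=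
  Tendsto (fun n : ℕ => (∑ i ∈ Finset.range n, dist (f^[i] y) (x i)) / n)
    atTop (nhds 0)

/-- The asymptotic average shadowing property. -/
def AsympAvgShadowing (f : X → X) : Prop :=
  ∀ x : ℕ → X, AsympAvgPseudoOrbit f x → ∃ y : X, AsympShadowedInAvg f x y

/-- An infinite `δ`-pseudo-orbit. -/
def PseudoOrbit (f : X → X) (δ : ℝ) (x : ℕ → X) : Prop :=
  ∀ i : ℕ, dist (f (x i)) (x (i + 1)) < δ

/-- There exists a finite `δ`-pseudo-orbit of length `n` from `x` to `y`. -/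
def FinChain (f : X → X) (δ : ℝ) (n : ℕ) (x y : X) : Prop :=
  ∃ c : ℕ → X, c 0 = x ∧ c n = y ∧ ∀ i < n, dist (f (c i)) (c (i + 1)) < δ

/-- Chain transitivity. -/
def ChainTransitive (f : X → X) : Prop :=
  ∀ δ : ℝ, 0 < δ → ∀ x y : X, ∃ n : ℕ, 0 < n ∧ FinChain f δ n x y

/-- Chain mixing. -/
def ChainMixing (f : X → X) : Prop :=
  ∀ δ : ℝ, 0 < δ → ∀ x y : X, ∃ N : ℕ, 0 < N ∧ ∀ n : ℕ, N ≤ n → FinChain f δ n x y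

/-- The shadowing property. -/
def Shadowing (f : X → X) : Prop :=
  ∀ ε : ℝ, 0 < ε → ∃ δ : ℝ, 0 < δ ∧
    ∀ x : ℕ → X, PseudoOrbit f δ x → ∃ z : X, ∀ i : ℕ, dist (f^[i] z) (x i) < ε

/-- The limit shadowing property. -/
def LimitShadowing (f : X → X) : Prop :=
  ∀ x : ℕ → X, Tendsto (fun i : ℕ => dist (f (x i)) (x (i + 1))) atTop (nhds 0) →
    ∃ z : X, Tendsto (fun i : ℕ => dist (f^[i] z) (x i)) atTop (nhds 0)

/-- Topological transitivity. -/
def TopTransitive {Y : Type*} [TopologicalSpace Y] (f : Y → Y) : Prop :=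
  ∀ U V : Set Y, IsOpen U → IsOpen V → U.Nonempty → V.Nonempty →
    ∃ n : ℕ, 0 < n ∧ (f^[n] '' U ∩ V).Nonempty

/-- Total transitivity. -/
def TotallyTransitive {Y : Type*} [TopologicalSpace Y] (f : Y → Y) : Prop :=
  ∀ n : ℕ, 1 ≤ n → TopTransitive f^[n]

/-- Topological weak mixing: `f × f` is transitive. -/
def WeaklyMixing {Y : Type*} [TopologicalSpace Y] (f : Y → Y) : Prop :=
  TopTransitive (Prod.map f f)

/-- Topological mixing. -/
def TopMixing {Y : Type*} [TopologicalSpace Y] (f : Y → Y) : Prop :=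
  ∀ U V : Set Y, IsOpen U → IsOpen V → U.Nonempty → V.Nonempty →
    ∃ N : ℕ, 0 < N ∧ ∀ n : ℕ, N ≤ n → (f^[n] '' U ∩ V).Nonempty

/-- The forward orbit of a point. -/
def fOrbit (f : X → X) (x : X) : Set X := Set.range fun n : ℕ => f^[n] x

/-- `x` is a minimal point of `f`: every point of the orbit closure of `x`
has orbit dense in that orbit closure. -/
def MinimalPoint (f : X → X) (x : X) : Prop :=
  ∀ y ∈ closure (fOrbit f x), closure (fOrbit f x) ⊆ closure (fOrbit f y)

variable [MeasurableSpace X]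

/-- `μ` is an `f`-invariant Borel probability measure. -/
def InvariantProb (f : X → X) (μ : Measure X) : Prop :=
  IsProbabilityMeasure μ ∧ ∀ B : Set X, MeasurableSet B → μ (f ⁻¹' B) = μ B

/-- A set is universally null if it has measure zero for every invariant
probability measure. -/
def UnivNull (f : X → X) (U : Set X) : Prop :=
  ∀ μ : Measure X, InvariantProb f μ → μ U = 0

/-- The measure center: complement of the union of all universally null open sets. -/
def measureCenter (f : X → X) : Set X :=
  (⋃ U ∈ {U : Set X | IsOpen U ∧ UnivNull f U}, U)ᶜ

/-- `μ` has full support. -/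
def FullSupport (μ : Measure X) : Prop :=
  ∀ U : Set X, IsOpen U → U.Nonempty → 0 < μ U

end Defs

section Visits

variable {X : Type*} [MetricSpace X]

/-- The set of visiting times `N(x,U)`. -/
def visitTimes (f : X → X) (x : X) (U : Set X) : Set ℕ :=
  {n : ℕ | 0 < n ∧ f^[n] x ∈ U}

/-- `η(n,U) = max_{x ∈ X} #(N(x,U) ∩ {0,…,n-1})`. -/
noncomputable def eta (f : X → X) (U : Set X) (n : ℕ) : ℕ :=
  sSup {k : ℕ | ∃ x : X, k = (visitTimes f x U ∩ Set.Iio n).ncard}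

/-- The visit frequency `ξ(U) = inf_{n>0} η(n,U)/n`. -/
noncomputable def xi (f : X → X) (U : Set X) : ℝ :=
  ⨅ n : ℕ, (eta f U (n + 1) : ℝ) / (n + 1)

/-- `J ⊆ ℕ` has asymptotic density `a`. -/
def HasDensity (J : Set ℕ) (a : ℝ) : Prop :=
  Tendsto (fun n : ℕ => ((J ∩ Set.Iio n).ncard : ℝ) / n) atTop (nhds a)

/-- Upper asymptotic density of a set of naturals. -/
noncomputable def upperDensity (J : Set ℕ) : ℝ :=
  limsup (fun n : ℕ => ((J ∩ Set.Iio n).ncard : ℝ) / n) atTop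

end Visits

section AuxProof

variable {X : Type*} [MetricSpace X] [CompactSpace X]

/-- Uniform chain mixing: a single length `N` works for all pairs of points. -/
lemma uniform_finChain (f : X → X) (hf : Continuous f) (hcm : ChainMixing f)
    {δ : ℝ} (hδ : 0 < δ) : ∃ N : ℕ, 0 < N ∧ ∀ u v : X, FinChain f δ N u v := by
  classical
  have hδ3 : 0 < δ / 3 := by linarith
  obtain ⟨γ0, hγ0, hγf⟩ := Metric.uniformContinuous_iff.mp (CompactSpace.uniformContinuous_of_continuous hf) (δ / 3) hδ3
  set γ := min γ0 (δ / 3) with hγdef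
  have hγ : 0 < γ := lt_min hγ0 hδ3
  obtain ⟨t, htfin, htcov⟩ := Metric.totallyBounded_iff.mp (isCompact_univ (X := X)).totallyBounded γ hγ
  have hex : ∀ p q : X, ∃ N : ℕ, 0 < N ∧ ∀ n : ℕ, N ≤ n → FinChain f (δ / 3) n p q :=
    fun p q => hcm (δ / 3) hδ3 p q
  choose Np hNp1 hNp2 using hex
  set tF := htfin.toFinset with htF
  set N := (tF ×ˢ tF).sup (fun pq : X × X => Np pq.1 pq.2) + 1 with hNdef
  refine ⟨N, Nat.succ_pos _, fun u v => ?_⟩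
  have hmem : ∀ w : X, ∃ p ∈ t, dist w p < γ := by
    intro w
    have := htcov (mem_univ w)
    simp only [Set.mem_iUnion, Metric.mem_ball] at this
    obtain ⟨p, hp, hd⟩ := this
    exact ⟨p, hp, hd⟩
  obtain ⟨p, hpt, hup⟩ := hmem u
  obtain ⟨q, hqt, hvq⟩ := hmem v
  have hNle : Np p q ≤ N := by
    have : Np p q ≤ (tF ×ˢ tF).sup (fun pq : X × X => Np pq.1 pq.2) := by
      refine Finset.le_sup (b := (p, q)) (f := fun pq : X × X => Np pq.1 pq.2) ?_
      simp [htF, Finset.mem_product, htfin.mem_toFinset, hpt, hqt]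
    omega
  obtain ⟨c, hc0, hcN, hct⟩ := hNp2 p q N hNle
  have hγle : γ ≤ δ / 3 := min_le_right _ _
  have hγle0 : γ ≤ γ0 := min_le_left _ _
  have hfup : dist (f u) (f p) < δ / 3 := hγf (lt_of_lt_of_le hup hγle0)
  refine ⟨fun i => if i = 0 then u else if i = N then v else c i, by simp,
    by simp [Nat.succ_ne_zero, hNdef], ?_⟩
  intro i hi
  have hiN : i ≠ N := Nat.ne_of_lt hi
  by_cases hi0 : i = 0
  · subst hi0
    by_cases h1N : 1 = N
    · simp only [if_pos rfl, ← h1N, if_neg one_ne_zero, if_pos rfl]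
      have hc1 : c 1 = q := by rw [h1N, hcN]
      have h1 : dist (f p) (c 1) < δ / 3 := by
        have := hct 0 hi
        rwa [hc0] at this
      have h2 : dist (c 1) v < γ := by rw [hc1, dist_comm]; exact hvq
      calc dist (f u) v ≤ dist (f u) (f p) + dist (f p) (c 1) + dist (c 1) v :=
            dist_triangle4 _ _ _ _
        _ < δ / 3 + δ / 3 + γ := add_lt_add (add_lt_add hfup h1) h2
        _ ≤ δ := by linarith
    · simp only [if_pos rfl, if_neg one_ne_zero, if_neg h1N]
      have h1 : dist (f p) (c 1) < δ / 3 := by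
        have := hct 0 hi
        rwa [hc0] at this
      calc dist (f u) (c 1) ≤ dist (f u) (f p) + dist (f p) (c 1) := dist_triangle _ _ _
        _ < δ / 3 + δ / 3 := add_lt_add hfup h1
        _ ≤ δ := by linarith
  · by_cases hi1N : i + 1 = N
    · simp only [if_neg hi0, if_neg hiN, if_pos hi1N, Nat.succ_ne_zero]
      have h1 : dist (f (c i)) (c (i + 1)) < δ / 3 := hct i hi
      have h2 : c (i + 1) = q := by rw [hi1N, hcN]
      calc dist (f (c i)) v ≤ dist (f (c i)) (c (i + 1)) + dist (c (i + 1)) v :=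
            dist_triangle _ _ _
        _ < δ / 3 + γ := by
            refine add_lt_add h1 ?_
            rw [h2, dist_comm]; exact hvq
        _ ≤ δ := by linarith
    · simp only [if_neg hi0, if_neg hiN, if_neg hi1N, if_neg (Nat.succ_ne_zero i)]
      have := hct i hi
      linarith
end AuxProof

/-- For a chain mixing continuous map on a compact metric space,
the average shadowing property is equivalent to average shadowing of genuine
pseudo-orbits. -/
theorem avgShadowing_iff_pseudoOrbits_shadowed
    {X : Type*} [MetricSpace X] [CompactSpace X]
    (f : X → X) (hf : Continuous f) (hcm : ChainMixing f) :
    AvgShadowing f ↔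
      ∀ ε : ℝ, 0 < ε → ∃ δ : ℝ, 0 < δ ∧
        ∀ x : ℕ → X, PseudoOrbit f δ x → ∃ y : X, ShadowedInAvg f ε x y := by
  classical
  constructor
  · -- forward: trivial since genuine pseudo-orbits are average pseudo-orbits
    intro h ε hε
    obtain ⟨δ, hδ, hsh⟩ := h ε hε
    refine ⟨δ, hδ, fun x hx => ?_⟩
    refine hsh x ⟨1, one_pos, fun n hn k => ?_⟩
    have hn0 : (0:ℝ) < n := by exact_mod_cast hn
    rw [div_lt_iff₀ hn0]
    have hne : (Finset.range n).Nonempty := Finset.nonempty_range_iff.mpr (by omega)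
    calc ∑ i ∈ Finset.range n, dist (f (x (i + k))) (x (i + k + 1))
        < ∑ _i ∈ Finset.range n, δ :=
          Finset.sum_lt_sum_of_nonempty hne fun i _ => hx (i + k)
      _ = δ * n := by rw [Finset.sum_const, Finset.card_range, nsmul_eq_mul, mul_comm]
  · -- backward
    intro h ε hε
    have hε2 : 0 < ε / 2 := by linarith
    obtain ⟨δ, hδ, hsh⟩ := h (ε / 2) hε2
    obtain ⟨N, hNpos, hchain⟩ := uniform_finChain f hf hcm hδ
    set D := Metric.diam (Set.univ : Set X) with hD
    have hD0 : 0 ≤ D := Metric.diam_nonneg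
    have hdistD : ∀ a b : X, dist a b ≤ D := fun a b =>
      Metric.dist_le_diam_of_mem isCompact_univ.isBounded (mem_univ a) (mem_univ b)
    have hNR : (0:ℝ) < (N:ℝ) := by exact_mod_cast hNpos
    have hD1 : (0:ℝ) < D + 1 := by linarith
    have hden : (0:ℝ) < 4 * (N:ℝ)^2 * (D+1) := by
      have : (0:ℝ) < (N:ℝ)^2 := pow_pos hNR 2
      nlinarith
    set δ' := δ * ε / (4 * (N:ℝ)^2 * (D+1)) with hδ'def
    have hδ' : 0 < δ' := div_pos (mul_pos hδ hε) hden
    set C := D * (N:ℝ)^2 * δ' / δ with hCdef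
    have hCeq : C = D * ε / (4 * (D+1)) := by
      rw [hCdef, hδ'def]
      field_simp
    have hC : C < ε / 2 := by
      rw [hCeq, div_lt_iff₀ (by linarith : (0:ℝ) < 4 * (D+1))]
      nlinarith
    refine ⟨δ', hδ', fun x hx => ?_⟩
    obtain ⟨N₀, hN₀, hxavg⟩ := hx
    set Good : ℕ → Prop :=
      fun k => ∀ j, j < N → dist (f (x (N*k + j))) (x (N*k + j + 1)) < δ with hGood
    have hch : ∀ k : ℕ, ∃ c : ℕ → X, c 0 = x (N*k) ∧ c N = x (N*k + N) ∧
        ∀ i, i < N → dist (f (c i)) (c (i+1)) < δ := fun k => hchain (x (N*k)) (x (N*k + N))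
    choose ch hch0 hchN hcht using hch
    set z : ℕ → X := fun i => if Good (i / N) then x i else ch (i / N) (i % N) with hzdef
    have key : ∀ m k r : ℕ, r < N → m = N * k + r → m / N = k ∧ m % N = r :=
      fun m k r hr hm => (Nat.div_mod_unique hNpos).mpr ⟨by omega, hr⟩
    have hz0 : ∀ k : ℕ, z (N * k) = x (N * k) := by
      intro k
      obtain ⟨hq, hr⟩ := key (N*k) k 0 hNpos (by ring)
      simp only [hzdef, hq, hr]
      split
      · rfl
      · exact hch0 k
    have hz0' : ∀ k : ℕ, z (N * k + N) = x (N * k + N) := by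
      intro k
      have := hz0 (k+1)
      rwa [Nat.mul_succ] at this
    have hzx : ∀ i : ℕ, ¬ Good (i / N) → z i = ch (i / N) (i % N) := by
      intro i hg
      simp only [hzdef, if_neg hg]
    have hz : PseudoOrbit f δ z := by
      intro i
      have hjN : i % N < N := Nat.mod_lt _ hNpos
      obtain ⟨k, j, hjlt, hi⟩ : ∃ k j, j < N ∧ i = N * k + j :=
        ⟨i / N, i % N, hjN, (Nat.div_add_mod i N).symm⟩
      subst hi
      obtain ⟨hq, hr⟩ := key (N*k+j) k j hjlt rfl
      by_cases hj1 : j + 1 < N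
      · obtain ⟨hq1, hr1⟩ := key (N*k+j+1) k (j+1) hj1 (by ring)
        by_cases hg : Good k
        · have e1 : z (N*k+j) = x (N*k+j) := by simp only [hzdef, hq, if_pos hg]
          have e2 : z (N*k+j+1) = x (N*k+j+1) := by simp only [hzdef, hq1, if_pos hg]
          rw [e1, e2]
          exact hg j hjlt
        · have e1 : z (N*k+j) = ch k j := by simp only [hzdef, hq, hr]; rw [if_neg hg]
          have e2 : z (N*k+j+1) = ch k (j+1) := by simp only [hzdef, hq1, hr1]; rw [if_neg hg]
          rw [e1, e2]
          exact hcht k j hjlt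
      · have hjN' : j + 1 = N := by omega
        have h2 : N*k + j + 1 = N*k + N := by omega
        have e2 : z (N*k+j+1) = x (N*k+j+1) := by rw [h2]; exact hz0' k
        by_cases hg : Good k
        · have e1 : z (N*k+j) = x (N*k+j) := by simp only [hzdef, hq, if_pos hg]
          rw [e1, e2]
          exact hg j hjlt
        · have e1 : z (N*k+j) = ch k j := by simp only [hzdef, hq, hr]; rw [if_neg hg]
          rw [e1, e2, h2, ← hchN k, ← hjN']
          exact hcht k j hjlt
    obtain ⟨y, hy⟩ := hsh z hz
    refine ⟨y, ?_⟩
    -- now compare averages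
    have havg_nonneg : ∀ (w w' : ℕ → X) (n : ℕ),
        0 ≤ (∑ i ∈ Finset.range n, dist (w i) (w' i)) / n :=
      fun w w' n => div_nonneg (Finset.sum_nonneg fun i _ => dist_nonneg) (Nat.cast_nonneg n)
    have havg_le : ∀ (w w' : ℕ → X) (n : ℕ),
        (∑ i ∈ Finset.range n, dist (w i) (w' i)) / n ≤ D := by
      intro w w' n
      rcases Nat.eq_zero_or_pos n with hn | hn
      · simp [hn, hD0]
      · have hn0 : (0:ℝ) < n := by exact_mod_cast hn
        rw [div_le_iff₀ hn0]
        calc ∑ i ∈ Finset.range n, dist (w i) (w' i) ≤ ∑ _i ∈ Finset.range n, D :=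
              Finset.sum_le_sum fun i _ => hdistD _ _
          _ = D * n := by rw [Finset.sum_const, Finset.card_range, nsmul_eq_mul, mul_comm]
    -- the key density estimate
    have hbound : ∀ n : ℕ, N₀ ≤ n →
        (∑ i ∈ Finset.range n, dist (z i) (x i)) / n ≤ C := by
      intro n hn
      have hn1 : 1 ≤ n := le_trans hN₀ hn
      have hn0 : (0:ℝ) < n := by exact_mod_cast hn1
      set B := (Finset.range (N*n)).filter
        (fun i => δ ≤ dist (f (x i)) (x (i+1))) with hBdef
      set T := (Finset.range n).filter (fun k => ¬ Good k) with hTdef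
      set S := (Finset.range n).filter (fun i => ¬ Good (i / N)) with hSdef
      -- T.card ≤ B.card
      have hwit : ∀ k : ℕ, ∃ j : ℕ, ¬ Good k →
          j < N ∧ δ ≤ dist (f (x (N*k + j))) (x (N*k + j + 1)) := by
        intro k
        by_cases hg : Good k
        · exact ⟨0, fun hc => absurd hg hc⟩
        · have hg' := hg
          simp only [hGood] at hg'
          push_neg at hg'
          obtain ⟨j, hj1, hj2⟩ := hg'
          exact ⟨j, fun _ => ⟨hj1, hj2⟩⟩
      choose w hwspec using hwit
      have hTB : T.card ≤ B.card := by
        apply Finset.card_le_card_of_injOn (fun k => N * k + w k)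
        · intro k hk
          simp only [Finset.mem_coe, hTdef, Finset.mem_filter, Finset.mem_range] at hk
          obtain ⟨hw1, hw2⟩ := hwspec k hk.2
          simp only [Finset.mem_coe, hBdef, Finset.mem_filter, Finset.mem_range]
          refine ⟨?_, hw2⟩
          have h3 : N * k + w k < N * k + N := Nat.add_lt_add_left hw1 _
          have h4 : N * k + N ≤ N * n := by
            rw [← Nat.mul_succ]
            exact Nat.mul_le_mul_left N hk.1
          omega
        · intro k1 h1 k2 h2 heq
          have heq' : N * k1 + w k1 = N * k2 + w k2 := heq
          simp only [hTdef, Finset.coe_filter, Set.mem_setOf_eq, Finset.mem_range] at h1 h2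
          have hw1 := (hwspec k1 h1.2).1
          have hw2 := (hwspec k2 h2.2).1
          have e1 : (N * k1 + w k1) / N = k1 := (key _ k1 (w k1) hw1 rfl).1
          have e2 : (N * k2 + w k2) / N = k2 := (key _ k2 (w k2) hw2 rfl).1
          rw [← e1, ← e2, heq']
      -- S.card ≤ N * T.card
      have hST : S.card ≤ N * T.card := by
        apply Finset.card_le_mul_card_image_of_maps_to (f := fun i => i / N)
        · intro i hi
          simp only [hSdef, Finset.mem_filter, Finset.mem_range] at hi
          simp only [hTdef, Finset.mem_filter, Finset.mem_range]
          exact ⟨lt_of_le_of_lt (Nat.div_le_self i N) hi.1, hi.2⟩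
        · intro k hk
          have hsub : S.filter (fun i => i / N = k) ⊆ Finset.Ico (N*k) (N*k + N) := by
            intro i hi
            simp only [Finset.mem_filter] at hi
            have hik := hi.2
            have h1 := Nat.div_add_mod i N
            have h2 := Nat.mod_lt i hNpos
            rw [hik] at h1
            simp only [Finset.mem_Ico]
            omega
          calc (S.filter (fun i => i / N = k)).card ≤ (Finset.Ico (N*k) (N*k + N)).card :=
                Finset.card_le_card hsub
            _ = N := by rw [Nat.card_Ico]; omega
      -- sum bound
      have hsum : (∑ i ∈ Finset.range n, dist (z i) (x i)) ≤ (S.card : ℝ) * D := by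
        calc ∑ i ∈ Finset.range n, dist (z i) (x i)
            ≤ ∑ i ∈ Finset.range n, (if Good (i / N) then 0 else D) := by
              refine Finset.sum_le_sum fun i _ => ?_
              by_cases hg : Good (i / N)
              · simp only [hzdef, if_pos hg, dist_self, le_refl]
              · simp only [if_neg hg]
                exact hdistD _ _
          _ = (S.card : ℝ) * D := by
              rw [Finset.sum_ite, Finset.sum_const_zero, Finset.sum_const, zero_add,
                nsmul_eq_mul, hSdef]
      -- B.card bound from the average pseudo-orbit property
      have hmN : N₀ ≤ N * n := le_trans hn (Nat.le_mul_of_pos_left n hNpos)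
      have hmpos : (0:ℝ) < ((N*n : ℕ) : ℝ) := by
        have : 1 ≤ N * n := le_trans hn1 (Nat.le_mul_of_pos_left n hNpos)
        exact_mod_cast this
      have havg := hxavg (N*n) hmN 0
      simp only [add_zero] at havg
      rw [div_lt_iff₀ hmpos] at havg
      have hBsum : (B.card : ℝ) * δ ≤
          ∑ i ∈ Finset.range (N*n), dist (f (x i)) (x (i+1)) := by
        calc (B.card : ℝ) * δ = ∑ _i ∈ B, δ := by
              rw [Finset.sum_const, nsmul_eq_mul]
          _ ≤ ∑ i ∈ B, dist (f (x i)) (x (i+1)) :=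
              Finset.sum_le_sum fun i hi => by
                simp only [hBdef, Finset.mem_filter] at hi
                exact hi.2
          _ ≤ ∑ i ∈ Finset.range (N*n), dist (f (x i)) (x (i+1)) :=
              Finset.sum_le_sum_of_subset_of_nonneg (Finset.filter_subset _ _)
                (fun i _ _ => dist_nonneg)
      have hB : (B.card : ℝ) * δ ≤ (n:ℝ) * N * δ' := by
        refine le_trans hBsum (le_of_lt (lt_of_lt_of_le havg ?_))
        push_cast
        ring_nf
        exact le_refl _
      -- combine
      rw [div_le_div_iff₀ hn0 hδ] at *
      · calc (∑ i ∈ Finset.range n, dist (z i) (x i)) * δ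
            ≤ ((S.card : ℝ) * D) * δ := mul_le_mul_of_nonneg_right hsum hδ.le
          _ ≤ (((N * B.card : ℕ) : ℝ) * D) * δ := by
              have hcast : (S.card : ℝ) ≤ ((N * B.card : ℕ) : ℝ) := by
                exact_mod_cast hST.trans (Nat.mul_le_mul_left N hTB)
              exact mul_le_mul_of_nonneg_right
                (mul_le_mul_of_nonneg_right hcast hD0) hδ.le
          _ = (N:ℝ) * D * ((B.card : ℝ) * δ) := by push_cast; ring
          _ ≤ (N:ℝ) * D * ((n:ℝ) * N * δ') :=
              mul_le_mul_of_nonneg_left hB (mul_nonneg (Nat.cast_nonneg N) hD0)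
          _ = D * (N:ℝ)^2 * δ' * n := by ring
    -- assemble the limsup estimate
    show limsup (fun n : ℕ => (∑ i ∈ Finset.range n, dist (f^[i] y) (x i)) / n) atTop < ε
    have hle : ∀ n : ℕ,
        (∑ i ∈ Finset.range n, dist (f^[i] y) (x i)) / n ≤
          (∑ i ∈ Finset.range n, dist (f^[i] y) (z i)) / n +
          (∑ i ∈ Finset.range n, dist (z i) (x i)) / n := by
      intro n
      rcases Nat.eq_zero_or_pos n with hn | hn
      · simp [hn]
      · have hn0 : (0:ℝ) < n := by exact_mod_cast hn
        rw [← add_div, div_le_div_iff₀ hn0 hn0]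
        refine mul_le_mul_of_nonneg_right ?_ hn0.le
        rw [← Finset.sum_add_distrib]
        exact Finset.sum_le_sum fun i _ => dist_triangle _ _ _
    have hvbdd : IsBoundedUnder (· ≤ ·) atTop
        (fun n : ℕ => (∑ i ∈ Finset.range n, dist (f^[i] y) (z i)) / n) :=
      ⟨D, Filter.eventually_map.mpr (Filter.Eventually.of_forall fun n => havg_le _ _ n)⟩
    have hy' : limsup
        (fun n : ℕ => (∑ i ∈ Finset.range n, dist (f^[i] y) (z i)) / n) atTop < ε / 2 := hy
    have hvev : ∀ᶠ n in atTop,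
        (∑ i ∈ Finset.range n, dist (f^[i] y) (z i)) / n < ε / 2 :=
      eventually_lt_of_limsup_lt hy' hvbdd
    have haev : ∀ᶠ n in atTop,
        (∑ i ∈ Finset.range n, dist (z i) (x i)) / n ≤ C :=
      Filter.eventually_atTop.mpr ⟨N₀, fun n hn => hbound n hn⟩
    have huev : ∀ᶠ n in atTop,
        (∑ i ∈ Finset.range n, dist (f^[i] y) (x i)) / n ≤ ε / 2 + C := by
      filter_upwards [hvev, haev] with n h1 h2
      linarith [hle n]
    have hcob : IsCoboundedUnder (· ≤ ·) atTop
        (fun n : ℕ => (∑ i ∈ Finset.range n, dist (f^[i] y) (x i)) / n) :=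
      Filter.isCoboundedUnder_le_of_le atTop (fun n => havg_nonneg _ _ n)
    calc limsup (fun n : ℕ => (∑ i ∈ Finset.range n, dist (f^[i] y) (x i)) / n) atTop
        ≤ ε / 2 + C := Filter.limsup_le_of_le hcob huev
      _ < ε := by linarith
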